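/- Let X be a compact metric space and μ a Borel probability measure on X. Every expansive continuous map f : X → X with the weak μ-shadowing property is μ-topologically stable. -/

import Mathlib

open MeasureTheory

/-- `f` is `μ`-topologically stable. -/
def MuTopStable {X : Type*} [MetricSpace X] [MeasurableSpace X]
    (μ : Measure X) (f : X → X) : Prop :=
  ∀ ε > 0, ∃ δ > 0, ∀ g : X → X, Continuous g →
    (∀ x, dist (f x) (g x) ≤ δ) →
    ∃ (Y : Set X) (hg : Set.MapsTo g Y Y), IsCompact Y ∧
      μ Yᶜ ≤ ENNReal.ofReal ε ∧
      ∃ h : Y → X, Continuous h ∧ (∀ y : Y, dist (h y) (y : X) ≤ ε) ∧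
        ∀ y : Y, f (h y) = h ⟨g y, hg y.2⟩

/-- `f` is expansive with some expansivity constant `e > 0`. -/
def Expansive {X : Type*} [MetricSpace X] (f : X → X) : Prop :=
  ∃ e > 0, ∀ x y : X, (∀ n : ℕ, dist (f^[n] x) (f^[n] y) ≤ e) → x = y

/-- `f` has the weak `μ`-shadowing property. -/
def WeakMuShadowing {X : Type*} [MetricSpace X] [MeasurableSpace X]
    (μ : Measure X) (f : X → X) : Prop :=
  ∀ ε > 0, ∃ δ > 0, ∃ B : Set X, MeasurableSet B ∧ μ Bᶜ ≤ ENNReal.ofReal ε ∧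
    ∀ x : ℕ → X, x 0 ∈ B → (∀ n, dist (f (x n)) (x (n + 1)) ≤ δ) →
      ∃ y : X, ∀ n, dist (f^[n] y) (x n) ≤ ε

theorem muTopStable_of_expansive_weakMuShadowing
    {X : Type*} [MetricSpace X] [CompactSpace X] [MeasurableSpace X] [BorelSpace X]
    (μ : Measure X) [IsProbabilityMeasure μ]
    (f : X → X) (hf : Continuous f)
    (hexp : Expansive f) (hsh : WeakMuShadowing μ f) :
    MuTopStable μ f := by
  obtain ⟨e, he, hE⟩ := hexp
  intro ε hε
  set ε' : ℝ := min ε (e / 2) with hε'def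
  have hε'pos : 0 < ε' := lt_min hε (by linarith)
  have hε'ε : ε' ≤ ε := min_le_left _ _
  have hε'e : ε' + ε' ≤ e := by
    have := min_le_right ε (e / 2)
    linarith
  obtain ⟨δ, hδ, B, hBmeas, hBμ, hBsh⟩ := hsh ε' hε'pos
  refine ⟨δ, hδ, ?_⟩
  intro g hg hfg
  -- The shadowing relation
  set P : X → X → Prop := fun y x => ∀ n : ℕ, dist (f^[n] x) (g^[n] y) ≤ ε' with hPdef
  -- uniqueness of shadowing points
  have huniq : ∀ y x x', P y x → P y x' → x = x' := by
    intro y x x' hx hx'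
    refine hE x x' fun n => ?_
    calc dist (f^[n] x) (f^[n] x')
        ≤ dist (f^[n] x) (g^[n] y) + dist (g^[n] y) (f^[n] x') := dist_triangle _ _ _
      _ ≤ ε' + ε' := by
          have := hx n
          have := hx' n
          rw [dist_comm (g^[n] y)]
          linarith
      _ ≤ e := hε'e
  -- limit lemma: shadowability passes to limits
  have hlim : ∀ (y : ℕ → X) (a : X) (x : ℕ → X), Filter.Tendsto y Filter.atTop (nhds a) →
      (∀ j, P (y j) (x j)) →
      ∃ b, P a b ∧ ∃ φ : ℕ → ℕ, StrictMono φ ∧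
        Filter.Tendsto (x ∘ φ) Filter.atTop (nhds b) := by
    intro y a x hy hPx
    obtain ⟨b, φ, hφ, hconv⟩ := CompactSpace.tendsto_subseq x
    refine ⟨b, fun n => ?_, φ, hφ, hconv⟩
    have h1 : Filter.Tendsto (fun j => f^[n] (x (φ j))) Filter.atTop (nhds (f^[n] b)) :=
      ((hf.iterate n).tendsto b).comp hconv
    have h2 : Filter.Tendsto (fun j => g^[n] (y (φ j))) Filter.atTop (nhds (g^[n] a)) :=
      ((hg.iterate n).tendsto a).comp (hy.comp hφ.tendsto_atTop)
    exact le_of_tendsto (h1.dist h2) (Filter.Eventually.of_forall fun j => hPx (φ j) n)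
  -- the union of iterates of B
  set U : Set X := ⋃ k : ℕ, g^[k] '' B with hUdef
  set Y : Set X := closure U with hYdef
  -- existence of shadowing points for points of U
  have hexU : ∀ y ∈ U, ∃ x, P y x := by
    intro y hy
    obtain ⟨k, x₀, hx₀B, rfl⟩ : ∃ k x₀, x₀ ∈ B ∧ g^[k] x₀ = y := by
      simpa [hUdef, Set.mem_iUnion] using hy
    obtain ⟨z, hz⟩ := hBsh (fun n => g^[n] x₀) (by simpa using hx₀B)
      (fun n => by
        simpa [Function.iterate_succ_apply'] using hfg (g^[n] x₀))
    refine ⟨f^[k] z, fun n => ?_⟩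
    have := hz (n + k)
    rwa [Function.iterate_add_apply f n k z, Function.iterate_add_apply g n k x₀] at this
  -- existence on Y = closure U
  have hexY : ∀ y ∈ Y, ∃ x, P y x := by
    intro y hy
    obtain ⟨u, huU, huy⟩ := mem_closure_iff_seq_limit.1 hy
    choose x hx using fun j => hexU (u j) (huU j)
    obtain ⟨b, hb, -⟩ := hlim u y x huy hx
    exact ⟨b, hb⟩
  -- Y is g-invariant
  have hgU : g '' U ⊆ U := by
    rintro - ⟨u, hu, rfl⟩
    obtain ⟨k, x₀, hx₀, rfl⟩ : ∃ k x₀, x₀ ∈ B ∧ g^[k] x₀ = u := by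
      simpa [hUdef, Set.mem_iUnion] using hu
    exact Set.mem_iUnion.2 ⟨k + 1, x₀, hx₀,
      by rw [Function.iterate_succ_apply' g k x₀]⟩
  have hgY : Set.MapsTo g Y Y := by
    intro y hy
    have : g y ∈ g '' closure U := ⟨y, hy, rfl⟩
    exact closure_mono hgU (image_closure_subset_closure_image hg this)
  have hBY : B ⊆ Y := fun b hb =>
    subset_closure (Set.mem_iUnion.2 ⟨0, b, hb, rfl⟩)
  refine ⟨Y, hgY, isClosed_closure.isCompact, ?_, ?_⟩
  · refine le_trans (μ.mono ?_) (le_trans hBμ (ENNReal.ofReal_le_ofReal hε'ε))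
    exact Set.compl_subset_compl.2 hBY
  -- construct h
  have hexY' : ∀ y : Y, ∃ x, P (y : X) x := fun y => hexY y y.2
  choose h hh using hexY'
  refine ⟨h, ?_, ?_, ?_⟩
  · -- continuity of h
    refine continuous_iff_seqContinuous.2 ?_
    intro y a hy
    refine Filter.tendsto_of_subseq_tendsto fun ns hns => ?_
    have hya : Filter.Tendsto (fun j => ((y (ns j)) : X)) Filter.atTop (nhds (a : X)) :=
      (continuous_subtype_val.tendsto a).comp (hy.comp hns)
    obtain ⟨b, hb, φ, hφ, hconv⟩ :=
      hlim (fun j => ((y (ns j)) : X)) (a : X) (fun j => h (y (ns j))) hya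
        (fun j => hh (y (ns j)))
    refine ⟨φ, ?_⟩
    have : b = h a := huniq (a : X) b (h a) hb (hh a)
    simpa [this, Function.comp_def] using hconv
  · -- closeness to identity
    intro y
    have := hh y 0
    simpa using le_trans this hε'ε
  · -- conjugacy
    intro y
    refine huniq (g (y : X)) (f (h y)) (h ⟨g y, hgY y.2⟩) (fun n => ?_) ?_
    · have := hh y (n + 1)
      rwa [Function.iterate_succ_apply f n, Function.iterate_succ_apply g n] at this
    · exact hh ⟨g y, hgY y.2⟩
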